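/- Let σ and τ be open simplices in ℝ^m with vertex sets V(σ) and V(τ), such that every face of σ and of τ is either disjoint from or equal to every face of the other. If x ∈ closure(σ) ∩ closure(τ), then x lies in the open face of σ spanned by V(σ) ∩ V(τ); in particular closure(σ) ∩ closure(τ) ⊆ conv(V(σ) ∩ V(τ)). -/

import Mathlib

/-- The open simplex spanned by a finite set `V` of points: strictly positive barycentric
combinations of the elements of `V`. -/
def openSimplexOf {m : ℕ} (V : Finset (Fin m → ℝ)) : Set (Fin m → ℝ) :=
  {x | ∃ w : (Fin m → ℝ) → ℝ, (∀ v ∈ V, 0 < w v) ∧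
    ∑ v ∈ V, w v = 1 ∧ ∑ v ∈ V, w v • v = x}

lemma openSimplexOf_subset_convexHull {m : ℕ} (V : Finset (Fin m → ℝ)) :
    openSimplexOf V ⊆ convexHull ℝ (V : Set (Fin m → ℝ)) := by
  rintro x ⟨w, hw, hs, hx⟩
  rw [Finset.convexHull_eq]
  exact ⟨w, fun y hy => (hw y hy).le, hs, by
    rw [Finset.centerMass_eq_of_sum_1 _ _ hs]; simpa using hx⟩

lemma closure_openSimplex_subset {m : ℕ} (V : Finset (Fin m → ℝ)) :
    closure (openSimplexOf V) ⊆ convexHull ℝ (V : Set (Fin m → ℝ)) :=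
  closure_minimal (openSimplexOf_subset_convexHull V)
    (V.finite_toSet.isClosed_convexHull (𝕜 := ℝ))

lemma exists_face {m : ℕ} (V : Finset (Fin m → ℝ)) (x : Fin m → ℝ)
    (hx : x ∈ closure (openSimplexOf V)) :
    ∃ A : Finset (Fin m → ℝ), A ⊆ V ∧ A.Nonempty ∧ x ∈ openSimplexOf A := by
  have hx' := closure_openSimplex_subset V hx
  rw [Finset.convexHull_eq] at hx'
  obtain ⟨w, hw, hs, hx⟩ := hx'
  rw [Finset.centerMass_eq_of_sum_1 _ _ hs] at hx
  refine ⟨V.filter (fun v => 0 < w v), Finset.filter_subset _ _, ?_, w, ?_, ?_, ?_⟩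
  · by_contra h
    rw [Finset.not_nonempty_iff_eq_empty, Finset.filter_eq_empty_iff] at h
    have : ∑ v ∈ V, w v = 0 := Finset.sum_eq_zero fun v hv =>
      le_antisymm (not_lt.1 (h hv)) (hw v hv)
    simp [this] at hs
  · intro v hv; exact (Finset.mem_filter.1 hv).2
  · rw [← hs]
    exact (Finset.sum_filter_of_ne fun v hv h => by
      rcases lt_or_eq_of_le (hw v hv) with h' | h'
      · exact h'
      · exact absurd h'.symm h).symm ▸ rfl
  · rw [← hx]
    refine Finset.sum_filter_of_ne fun v hv h => ?_
    rcases lt_or_eq_of_le (hw v hv) with h' | h'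
    · exact h'
    · exact absurd (by rw [← h']; simp) h

/-- let `σ`, `τ` be open simplices with (affinely independent) vertex sets
`S`, `T` such that every (open) face of one is either disjoint from or equal to every face
of the other.  If `x ∈ closure σ ∩ closure τ`, then `x` lies in an open face of `σ`
spanned by vertices common to `S` and `T`; in particular
`closure σ ∩ closure τ ⊆ convexHull ℝ (S ∩ T)`. -/
theorem stmt_6 (m : ℕ) (S T : Finset (Fin m → ℝ))
    (hS : S.Nonempty) (hT : T.Nonempty)
    (hSindep : AffineIndependent ℝ (fun v : {x // x ∈ S} => (v : Fin m → ℝ)))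
    (hTindep : AffineIndependent ℝ (fun v : {x // x ∈ T} => (v : Fin m → ℝ)))
    (hfaces : ∀ A : Finset (Fin m → ℝ), A ⊆ S → A.Nonempty →
      ∀ B : Finset (Fin m → ℝ), B ⊆ T → B.Nonempty →
        openSimplexOf A ∩ openSimplexOf B = ∅ ∨ A = B) :
    (∀ x ∈ closure (openSimplexOf S) ∩ closure (openSimplexOf T),
      ∃ A : Finset (Fin m → ℝ), A ⊆ S ∩ T ∧ A.Nonempty ∧ x ∈ openSimplexOf A) ∧
    closure (openSimplexOf S) ∩ closure (openSimplexOf T)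
      ⊆ convexHull ℝ ((S ∩ T : Finset (Fin m → ℝ)) : Set (Fin m → ℝ)) := by
  have key : ∀ x ∈ closure (openSimplexOf S) ∩ closure (openSimplexOf T),
      ∃ A : Finset (Fin m → ℝ), A ⊆ S ∩ T ∧ A.Nonempty ∧ x ∈ openSimplexOf A := by
    rintro x ⟨hxS, hxT⟩
    obtain ⟨A, hAS, hAne, hxA⟩ := exists_face S x hxS
    obtain ⟨B, hBT, hBne, hxB⟩ := exists_face T x hxT
    rcases hfaces A hAS hAne B hBT hBne with h | h
    · exact absurd h (by rw [Set.eq_empty_iff_forall_notMem]; push_neg; exact ⟨x, hxA, hxB⟩)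
    · exact ⟨A, fun v hv => Finset.mem_inter.2 ⟨hAS hv, hBT (h ▸ hv)⟩, hAne, hxA⟩
  refine ⟨key, fun x hx => ?_⟩
  obtain ⟨A, hA, _, hxA⟩ := key x hx
  exact convexHull_mono (by exact_mod_cast hA) (openSimplexOf_subset_convexHull A hxA)
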